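/- Let α ∈ ℝ, let v_l, v_r be periodic stationary solutions with constant α, and let U be a shock profile connecting v_l to v_r such that U(0) ≠ v_l(0) and U(0) ≠ v_r(0). Then ∫₀¹ ∂_v A(y, v_l(y)) dy ≥ 0 and ∫₀¹ ∂_v A(y, v_r(y)) dy ≤ 0. -/

import Mathlib

open MeasureTheory Filter Set Topology
open Function

lemma hasDerivAt_snd {A : ℝ → ℝ → ℝ} (hA : ContDiff ℝ 1 (Function.uncurry A)) (x u : ℝ) :
    HasDerivAt (A x) (fderiv ℝ (Function.uncurry A) (x, u) (0, 1)) u := by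
  have hF := (hA.differentiable one_ne_zero (x, u)).hasFDerivAt
  have hL : HasFDerivAt (fun u : ℝ => ((x : ℝ), u))
      (((0 : ℝ →L[ℝ] ℝ)).prod (ContinuousLinearMap.id ℝ ℝ)) u :=
    (hasFDerivAt_const x u).prodMk (hasFDerivAt_id u)
  have h := (hF.comp u hL).hasDerivAt
  simp [Function.comp, Function.uncurry] at h
  exact h

lemma contDerivSnd {A : ℝ → ℝ → ℝ} (hA : ContDiff ℝ 1 (Function.uncurry A)) :
    Continuous (fun p : ℝ × ℝ => deriv (A p.1) p.2) := by
  have h : (fun p : ℝ × ℝ => deriv (A p.1) p.2)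
      = fun p => fderiv ℝ (Function.uncurry A) p (0, 1) := by
    funext p
    exact (hasDerivAt_snd hA p.1 p.2).deriv
  rw [h]
  exact (hA.continuous_fderiv one_ne_zero).clm_apply continuous_const

/-- a periodic function equals its value at the fractional part -/
lemma per_fract {β : Type*} {f : ℝ → β} (hf : ∀ x, f (x + 1) = f x) (x : ℝ) :
    f x = f (Int.fract x) := by
  have hp : Function.Periodic f 1 := hf
  have := hp.sub_int_mul_eq (x := x) (n := ⌊x⌋)
  rw [mul_one] at this
  rw [← this]
  rfl

lemma per_bounded {v : ℝ → ℝ} (hvc : Continuous v) (hvp : ∀ x, v (x + 1) = v x) :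
    ∃ M : ℝ, 0 ≤ M ∧ ∀ x, |v x| ≤ M := by
  obtain ⟨z, _, hz⟩ := isCompact_Icc.exists_isMaxOn (f := fun x => |v x|) ⟨0, by norm_num⟩
    (hvc.abs.continuousOn (s := Icc (0:ℝ) 1))
  refine ⟨|v z|, abs_nonneg _, fun x => ?_⟩
  rw [per_fract hvp x]
  exact hz ⟨Int.fract_nonneg x, (Int.fract_lt_one x).le⟩

lemma key_est {A : ℝ → ℝ → ℝ} (hA : ContDiff ℝ 1 (Function.uncurry A))
    (hper : ∀ y u, A (y + 1) u = A y u)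
    {v : ℝ → ℝ} (hvc : Continuous v) (hvp : ∀ x, v (x + 1) = v x) {ε : ℝ} (hε : 0 < ε) :
    ∃ δ, 0 < δ ∧ δ ≤ 1 ∧ ∀ x s, |s| ≤ δ →
      |A x (v x + s) - A x (v x) - deriv (A x) (v x) * s| ≤ ε * |s| := by
  obtain ⟨M, hM0, hM⟩ := per_bounded hvc hvp
  set f : ℝ × ℝ → ℝ := fun p => deriv (A p.1) p.2 with hfdef
  have hf : Continuous f := contDerivSnd hA
  set K : Set (ℝ × ℝ) := Icc (0:ℝ) 1 ×ˢ Icc (-(M+1)) (M+1) with hKdef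
  have hK : IsCompact K := isCompact_Icc.prod isCompact_Icc
  have huc := hK.uniformContinuousOn_of_continuous hf.continuousOn
  rw [Metric.uniformContinuousOn_iff] at huc
  obtain ⟨δ₀, hδ₀, hδ⟩ := huc ε hε
  refine ⟨min (δ₀/2) 1, by positivity, min_le_right _ _, ?_⟩
  intro x s hs
  have hs1 : |s| ≤ 1 := hs.trans (min_le_right _ _)
  have hsδ : |s| < δ₀ := lt_of_le_of_lt (hs.trans (min_le_left _ _)) (by linarith)
  -- reduce to fractional part
  have hAx : A x = A (Int.fract x) := by
    funext u
    exact per_fract (f := fun y => A y u) (fun y => hper y u) x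
  have hvx : v x = v (Int.fract x) := per_fract hvp x
  rw [hAx, hvx]
  set x' := Int.fract x with hx'def
  have hx' : x' ∈ Icc (0:ℝ) 1 := ⟨Int.fract_nonneg x, (Int.fract_lt_one x).le⟩
  set u := v x' with hudef
  have hu : |u| ≤ M := hM x'
  -- FTC
  have hder : ∀ t : ℝ, HasDerivAt (A x') (deriv (A x') t) t := fun t =>
    ((hasDerivAt_snd hA x' t).differentiableAt).hasDerivAt
  have hdcont : Continuous (fun t => deriv (A x') t) := hf.comp (Continuous.prodMk_right x')
  have hFTC : (∫ t in u..(u+s), deriv (A x') t) = A x' (u+s) - A x' u :=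
    intervalIntegral.integral_deriv_eq_sub (fun t _ => (hder t).differentiableAt)
      (hdcont.intervalIntegrable _ _)
  have hconst : (∫ t in u..(u+s), deriv (A x') u) = deriv (A x') u * s := by
    simp [intervalIntegral.integral_const]
    ring
  have hsub : A x' (u+s) - A x' u - deriv (A x') u * s
      = ∫ t in u..(u+s), (deriv (A x') t - deriv (A x') u) := by
    rw [intervalIntegral.integral_sub (hdcont.intervalIntegrable _ _)
      (intervalIntegrable_const), hFTC, hconst]
  rw [hsub]
  have hbd : ∀ t ∈ Set.uIoc u (u+s), ‖deriv (A x') t - deriv (A x') u‖ ≤ ε := by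
    intro t ht
    have ht' := Set.uIoc_subset_uIcc ht
    have htu : |t - u| ≤ |s| := by
      rw [Set.uIcc_eq_union] at ht'
      rcases ht' with h | h <;>
        (rw [Set.mem_Icc] at h; rw [abs_le];
         constructor <;> linarith [abs_nonneg s, le_abs_self s, neg_abs_le s])
    have htm : |t| ≤ M + 1 := by
      have := abs_sub_abs_le_abs_sub t u
      linarith
    have hmem1 : ((x', t) : ℝ × ℝ) ∈ K := ⟨hx', by rw [Set.mem_Icc, ← abs_le]; exact htm⟩
    have hmem2 : ((x', u) : ℝ × ℝ) ∈ K := ⟨hx', by rw [Set.mem_Icc, ← abs_le]; linarith⟩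
    have hdist : dist ((x', t) : ℝ × ℝ) ((x', u)) < δ₀ := by
      rw [Prod.dist_eq]
      simp only [dist_self, Real.dist_eq]
      exact max_lt (by positivity) (lt_of_le_of_lt htu hsδ) |>.trans_le le_rfl
    have := hδ _ hmem1 _ hmem2 hdist
    rw [Real.dist_eq] at this
    exact le_of_lt this
  calc |∫ t in u..(u+s), (deriv (A x') t - deriv (A x') u)|
      ≤ ε * |u + s - u| := intervalIntegral.norm_integral_le_of_norm_le_const hbd
    _ = ε * |s| := by ring_nf

lemma per_int {b : ℝ → ℝ} (hb : Continuous b) (hbp : Function.Periodic b 1) (X : ℝ) :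
    ∀ n : ℕ, (∫ t in (X - n)..X, b t) = n * ∫ t in (0:ℝ)..1, b t := by
  intro n
  induction n with
  | zero => simp
  | succ n ih =>
    have h1 : (∫ t in (X - (n+1:ℕ))..(X - n), b t) = ∫ t in (0:ℝ)..1, b t := by
      have h := hbp.intervalIntegral_add_eq (X - (n+1:ℕ)) 0
      have e1 : X - (n+1:ℕ) + 1 = X - n := by push_cast; ring
      rw [e1] at h
      simpa using h
    have h2 := intervalIntegral.integral_add_adjacent_intervals
      (hb.intervalIntegrable (μ := MeasureTheory.volume) (X - (n+1:ℕ)) (X - n)) (hb.intervalIntegrable (X - n) X)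
    rw [← h2, h1, ih]
    push_cast
    ring

lemma core {b w : ℝ → ℝ} (hb : Continuous b) (hbp : Function.Periodic b 1)
    (hm : (∫ y in (0:ℝ)..1, b y) < 0) (hw : ContDiff ℝ 1 w)
    (hkey : ∀ ε > 0, ∃ δ > 0, ∀ x, |w x| ≤ δ → w x * deriv w x ≤ (b x + ε) * (w x)^2)
    (hlim : Tendsto w atBot (nhds 0)) : ∃ X, ∀ x ≤ X, w x = 0 := by
  set m := ∫ y in (0:ℝ)..1, b y with hmdef
  set ε := -m/2 with hεdef
  have hε : 0 < ε := by rw [hεdef]; linarith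
  obtain ⟨δ, hδ, hkey⟩ := hkey ε hε
  -- find X with |w x| < δ for x ≤ X
  have hev : ∀ᶠ x in atBot, |w x| < δ := by
    have := Metric.tendsto_nhds.mp hlim δ hδ
    simpa [Real.dist_eq] using this
  obtain ⟨X, hX⟩ := eventually_atBot.mp hev
  refine ⟨X, ?_⟩
  set B : ℝ → ℝ := fun x => ∫ t in X..x, (b t + ε) with hBdef
  have hBd : ∀ x, HasDerivAt B (b x + ε) x := by
    intro x
    exact intervalIntegral.integral_hasDerivAt_right
      ((hb.add continuous_const).intervalIntegrable _ _)
      ((hb.add continuous_const).stronglyMeasurable.stronglyMeasurableAtFilter)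
      ((hb.add continuous_const).continuousAt)
  have hBc : Continuous B := by
    rw [continuous_iff_continuousAt]; exact fun x => (hBd x).continuousAt
  set φ : ℝ → ℝ := fun x => (w x)^2 * Real.exp (-2 * B x) with hφdef
  have hφd : ∀ x, HasDerivAt φ
      ((deriv w x * w x + w x * deriv w x) * Real.exp (-2 * B x)
        + (w x)^2 * (Real.exp (-2 * B x) * (-2 * (b x + ε)))) x := by
    intro x
    have hw' : HasDerivAt w (deriv w x) x := ((hw.differentiable one_ne_zero) x).hasDerivAt
    have h2 : HasDerivAt (fun x => (w x)^2) (deriv w x * w x + w x * deriv w x) x := by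
      have := hw'.fun_mul hw'
      simpa [pow_two] using this
    have hB' : HasDerivAt (fun x => Real.exp (-2 * B x))
        (Real.exp (-2 * B x) * (-2 * (b x + ε))) x := ((hBd x).const_mul (-2)).exp
    exact h2.mul hB'
  have hφanti : AntitoneOn φ (Iic X) := by
    apply antitoneOn_of_deriv_nonpos (convex_Iic X)
    · exact ((hw.continuous.pow 2).mul ((Real.continuous_exp.comp (continuous_const.mul hBc)))).continuousOn
    · exact fun x _ => ((hφd x).differentiableAt).differentiableWithinAt
    · intro x hx
      rw [interior_Iic] at hx
      rw [(hφd x).deriv]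
      have hk := hkey x (le_of_lt (hX x hx.le))
      nlinarith [Real.exp_pos (-2 * B x), mul_nonneg (Real.exp_pos (-2 * B x)).le
        (sub_nonneg.mpr hk)]
  have hBval : ∀ n : ℕ, -2 * B (X - n) = n * m := by
    intro n
    have h1 : B (X - n) = -∫ t in (X - n)..X, (b t + ε) := by
      rw [hBdef]
      exact intervalIntegral.integral_symm _ _
    rw [h1, intervalIntegral.integral_add (hb.intervalIntegrable _ _) intervalIntegrable_const,
      per_int hb hbp X n, intervalIntegral.integral_const]
    rw [hεdef]
    simp only [smul_eq_mul]
    ring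
  intro x hx
  have hkey2 : ∀ n : ℕ, X - n ≤ x → φ x ≤ (w (X - n))^2 * Real.exp (n * m) := by
    intro n hn
    have h1 : φ x ≤ φ (X - n) := hφanti (by simpa using hn.trans hx) (mem_Iic.mpr hx) hn
    calc φ x ≤ φ (X - n) := h1
      _ = (w (X - n))^2 * Real.exp (n * m) := by rw [hφdef]; simp only; rw [hBval n]
  have hseq : Tendsto (fun n : ℕ => (w (X - n))^2 * Real.exp (n * m)) atTop (nhds 0) := by
    have hXn : Tendsto (fun n : ℕ => X - (n : ℝ)) atTop atBot := by
      have h1 : Tendsto (fun n : ℕ => -(n : ℝ)) atTop atBot :=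
        tendsto_neg_atTop_atBot.comp tendsto_natCast_atTop_atTop
      simpa [sub_eq_add_neg] using tendsto_atBot_add_const_left atTop X h1
    have h1 : Tendsto (fun n : ℕ => w (X - n)) atTop (nhds 0) := hlim.comp hXn
    have h2 : Tendsto (fun n : ℕ => (w (X - n))^2) atTop (nhds 0) := by
      have := h1.mul h1
      simpa [pow_two] using this
    apply squeeze_zero (fun n => by positivity) (g := fun n : ℕ => (w (X - n))^2) _ h2
    intro n
    have he1 : Real.exp ((n : ℝ) * m) ≤ 1 := by
      rw [Real.exp_le_one_iff]
      have : (0:ℝ) ≤ n := Nat.cast_nonneg n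
      nlinarith
    show (w (X - n))^2 * Real.exp ((n:ℝ) * m) ≤ (w (X - n))^2
    nlinarith [sq_nonneg (w (X - n)), Real.exp_pos ((n:ℝ) * m)]
  have hφx : φ x ≤ 0 := by
    apply ge_of_tendsto hseq
    obtain ⟨N, hN⟩ := exists_nat_ge (X - x)
    filter_upwards [eventually_ge_atTop N] with n hn
    exact hkey2 n (by push_cast; have : (N:ℝ) ≤ n := Nat.cast_le.mpr hn; linarith)
  have hφ0 : (w x)^2 * Real.exp (-2 * B x) = 0 :=
    le_antisymm hφx (by positivity)
  have h2 : (w x)^2 = 0 := by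
    rcases mul_eq_zero.mp hφ0 with h | h
    · exact h
    · exact absurd h (Real.exp_ne_zero _)
  exact pow_eq_zero_iff two_ne_zero |>.mp h2

/-- A periodic stationary solution of the viscous conservation law, with
constant `α`. -/
def PerStat (A : ℝ → ℝ → ℝ) (α : ℝ) (v : ℝ → ℝ) : Prop :=
  ContDiff ℝ 1 v ∧ (∀ x, v (x + 1) = v x) ∧ ∀ x, deriv v x = A x (v x) - α

/-- A shock profile connecting `vl` to `vr`, with constant `α`. -/
def ShockProfile (A : ℝ → ℝ → ℝ) (α : ℝ) (vl vr U : ℝ → ℝ) : Prop :=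
  ContDiff ℝ 1 U ∧ (∀ x, deriv U x = A x (U x) - α) ∧
  Filter.Tendsto (fun x => U x - vl x) Filter.atBot (nhds 0) ∧
  Filter.Tendsto (fun x => U x - vr x) Filter.atTop (nhds 0)

lemma left_sign {A : ℝ → ℝ → ℝ} (hA : ContDiff ℝ 1 (Function.uncurry A))
    (hper : ∀ y u, A (y + 1) u = A y u) {α : ℝ} {v U : ℝ → ℝ}
    (hv : PerStat A α v) (hUc : ContDiff ℝ 1 U)
    (hUode : ∀ x, deriv U x = A x (U x) - α)
    (hUlim : Tendsto (fun x => U x - v x) atBot (nhds 0))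
    (h0 : U 0 ≠ v 0) : 0 ≤ ∫ y in (0:ℝ)..1, deriv (A y) (v y) := by
  by_contra hm
  push_neg at hm
  set b : ℝ → ℝ := fun y => deriv (A y) (v y) with hbdef
  have hbc : Continuous b :=
    (contDerivSnd hA).comp (continuous_id.prodMk hv.1.continuous)
  have hbp : Function.Periodic b 1 := by
    intro x
    show deriv (A (x + 1)) (v (x + 1)) = deriv (A x) (v x)
    have hAx : A (x + 1) = A x := funext fun u => hper x u
    rw [hAx, hv.2.1]
  set w : ℝ → ℝ := fun x => U x - v x with hwdef
  have hwc : ContDiff ℝ 1 w := hUc.sub hv.1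
  have hwderiv : ∀ x, deriv w x = A x (U x) - A x (v x) := by
    intro x
    have h1 : HasDerivAt U (deriv U x) x := ((hUc.differentiable one_ne_zero) x).hasDerivAt
    have h2 : HasDerivAt v (deriv v x) x := ((hv.1.differentiable one_ne_zero) x).hasDerivAt
    rw [(h1.fun_sub h2).deriv, hUode, hv.2.2]
    ring
  have hkey : ∀ ε > 0, ∃ δ > 0, ∀ x, |w x| ≤ δ → w x * deriv w x ≤ (b x + ε) * (w x)^2 := by
    intro ε hε
    obtain ⟨δ, hδpos, _, hest⟩ := key_est hA hper hv.1.continuous hv.2.1 hε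
    refine ⟨δ, hδpos, fun x hx => ?_⟩
    have hUx : U x = v x + w x := by rw [hwdef]; ring
    have h := hest x (w x) hx
    rw [← hUx] at h
    rw [hwderiv]
    have h1 : w x * (A x (U x) - A x (v x) - b x * w x) ≤ ε * (w x)^2 := by
      calc w x * (A x (U x) - A x (v x) - b x * w x)
          ≤ |w x * (A x (U x) - A x (v x) - b x * w x)| := le_abs_self _
        _ = |w x| * |A x (U x) - A x (v x) - b x * w x| := abs_mul _ _
        _ ≤ |w x| * (ε * |w x|) := by
            apply mul_le_mul_of_nonneg_left h (abs_nonneg _)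
        _ = ε * (w x)^2 := by rw [← sq_abs]; ring
    nlinarith [h1]
  obtain ⟨X, hX⟩ := core hbc hbp hm hwc hkey hUlim
  -- uniqueness via Gronwall on [X', 0]
  set X' := min X 0 with hX'def
  have hwX' : w X' = 0 := hX X' (min_le_left _ _)
  have hX'0 : X' ≤ (0:ℝ) := min_le_right _ _
  -- bound for U, v on Icc X' 0
  obtain ⟨z, _, hz⟩ := isCompact_Icc.exists_isMaxOn (s := Icc X' (0:ℝ))
    (f := fun x => |U x| + |v x|) ⟨X', Set.left_mem_Icc.mpr hX'0⟩
    ((hUc.continuous.abs.add hv.1.continuous.abs).continuousOn)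
  set M := |U z| + |v z| with hMdef
  have hM : ∀ x ∈ Icc X' (0:ℝ), |U x| ≤ M ∧ |v x| ≤ M := by
    intro x hx
    have h' : |U x| + |v x| ≤ M := hz hx
    constructor <;> [nlinarith [abs_nonneg (v x)]; nlinarith [abs_nonneg (U x)]]
  have hM0 : 0 ≤ M := by
    have h' : |U X'| + |v X'| ≤ M := hz (Set.left_mem_Icc.mpr hX'0)
    have h1 := abs_nonneg (U X'); have h2 := abs_nonneg (v X')
    linarith
  -- bound K for the derivative on the compact set
  obtain ⟨q, _, hq⟩ := (isCompact_Icc.prod isCompact_Icc).exists_isMaxOn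
    (f := fun p : ℝ × ℝ => |deriv (A p.1) p.2|)
    ⟨(X', 0), by constructor <;> simp [hX'0, hM0]⟩
    ((contDerivSnd hA).abs.continuousOn (s := Icc X' (0:ℝ) ×ˢ Icc (-M) M))
  set K := |deriv (A q.1) q.2| with hKdef
  have hbound : ∀ x ∈ Ico X' (0:ℝ), ‖deriv w x‖ ≤ K * ‖w x‖ + 0 := by
    intro x hx
    have hxI : x ∈ Icc X' (0:ℝ) := Ico_subset_Icc_self hx
    obtain ⟨hU1, hv1⟩ := hM x hxI
    rw [hwderiv]
    have hder : ∀ t : ℝ, HasDerivAt (A x) (deriv (A x) t) t := fun t =>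
      ((hasDerivAt_snd hA x t).differentiableAt).hasDerivAt
    have hdcont : Continuous (fun t => deriv (A x) t) :=
      (contDerivSnd hA).comp (Continuous.prodMk_right x)
    have hFTC : (∫ t in (v x)..(U x), deriv (A x) t) = A x (U x) - A x (v x) :=
      intervalIntegral.integral_deriv_eq_sub (fun t _ => (hder t).differentiableAt)
        (hdcont.intervalIntegrable _ _)
    rw [← hFTC]
    have hb2 : ∀ t ∈ Set.uIoc (v x) (U x), ‖deriv (A x) t‖ ≤ K := by
      intro t ht
      have ht' := Set.uIoc_subset_uIcc ht
      have htM : t ∈ Icc (-M) M := by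
        rw [Set.uIcc_eq_union] at ht'
        rcases ht' with h | h <;> rw [Set.mem_Icc] at h <;> constructor <;>
          [skip; skip; skip; skip] <;>
          first
          | linarith [abs_le.mp hU1, abs_le.mp hv1, h.1, h.2]
      exact hq (Set.mk_mem_prod hxI htM)
    calc ‖∫ t in (v x)..(U x), deriv (A x) t‖ ≤ K * |U x - v x| :=
          intervalIntegral.norm_integral_le_of_norm_le_const hb2
      _ = K * ‖w x‖ + 0 := by rw [hwdef]; simp [Real.norm_eq_abs]
  have hgron := norm_le_gronwallBound_of_norm_deriv_right_le
    (f := w) (f' := deriv w) (δ := 0) (K := K) (ε := 0) (a := X') (b := 0)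
    hwc.continuous.continuousOn
    (fun x _ => (((hwc.differentiable one_ne_zero) x).hasDerivAt).hasDerivWithinAt)
    (by rw [hwX']; simp) hbound
  have h0' := hgron 0 (Set.right_mem_Icc.mpr hX'0)
  rw [gronwallBound_ε0_δ0] at h0'
  have : w 0 = 0 := norm_le_zero_iff.mp h0'
  apply h0
  have : U 0 - v 0 = 0 := this
  linarith


/-- signs of the mean of `∂_v A` along the asymptotic states of a
nontrivial shock profile. -/
theorem shock_profile_sign_condition
    (A : ℝ → ℝ → ℝ)
    (hA : ContDiff ℝ 1 (Function.uncurry A))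
    (hper : ∀ y v, A (y + 1) v = A y v)
    (α : ℝ) (vl vr : ℝ → ℝ)
    (hvl : PerStat A α vl) (hvr : PerStat A α vr)
    (U : ℝ → ℝ) (hU : ShockProfile A α vl vr U)
    (h0l : U 0 ≠ vl 0) (h0r : U 0 ≠ vr 0) :
    (0 ≤ ∫ y in (0:ℝ)..1, deriv (fun w => A y w) (vl y)) ∧
    (∫ y in (0:ℝ)..1, deriv (fun w => A y w) (vr y)) ≤ 0 := by
  constructor
  · exact left_sign hA hper hvl hU.1 hU.2.1 hU.2.2.1 h0l
  · -- reflection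
    set A' : ℝ → ℝ → ℝ := fun x u => -A (-x) u with hA'def
    have hA' : ContDiff ℝ 1 (Function.uncurry A') := by
      have h : Function.uncurry A' = fun p : ℝ × ℝ => -(Function.uncurry A (-p.1, p.2)) := rfl
      rw [h]
      exact (hA.comp (ContDiff.prodMk (contDiff_fst.neg) contDiff_snd)).neg
    have hper' : ∀ y u, A' (y + 1) u = A' y u := by
      intro y u
      show -A (-(y+1)) u = -A (-y) u
      have h := hper (-(y+1)) u
      rw [show -(y+1) + 1 = -y by ring] at h
      rw [h]
    set v' : ℝ → ℝ := fun x => vr (-x) with hv'def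
    set U' : ℝ → ℝ := fun x => U (-x) with hU'def
    have hcn : ContDiff ℝ 1 (fun x : ℝ => -x) := contDiff_id.neg
    have hv' : PerStat A' (-α) v' := by
      refine ⟨hvr.1.comp hcn, ?_, ?_⟩
      · intro x
        show vr (-(x+1)) = vr (-x)
        have h := hvr.2.1 (-x - 1)
        rw [show -x - 1 + 1 = -x by ring] at h
        rw [show -(x+1) = -x - 1 by ring, h]
      · intro x
        show deriv (fun x => vr (-x)) x = A' x (v' x) - (-α)
        rw [deriv_comp_neg, hvr.2.2]
        show -(A (-x) (vr (-x)) - α) = -A (-x) (vr (-x)) - -α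
        ring
    have hU'c : ContDiff ℝ 1 U' := hU.1.comp hcn
    have hU'ode : ∀ x, deriv U' x = A' x (U' x) - (-α) := by
      intro x
      show deriv (fun x => U (-x)) x = A' x (U' x) - (-α)
      rw [deriv_comp_neg, hU.2.1]
      show -(A (-x) (U (-x)) - α) = -A (-x) (U (-x)) - -α
      ring
    have hU'lim : Tendsto (fun x => U' x - v' x) atBot (nhds 0) := by
      have h := hU.2.2.2.comp tendsto_neg_atBot_atTop
      exact h
    have h0' : U' 0 ≠ v' 0 := by
      show U (-0) ≠ vr (-0)
      rw [neg_zero]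
      exact h0r
    have hres := left_sign hA' hper' hv' hU'c hU'ode hU'lim h0'
    set b : ℝ → ℝ := fun y => deriv (A y) (vr y) with hbdef
    have hbp : Function.Periodic b 1 := by
      intro x
      show deriv (A (x + 1)) (vr (x + 1)) = deriv (A x) (vr x)
      have hAx : A (x + 1) = A x := funext fun u => hper x u
      rw [hAx, hvr.2.1]
    have hconv : ∀ y : ℝ, deriv (A' y) (v' y) = -(b (-y)) := by
      intro y
      show deriv (fun u => -A (-y) u) (vr (-y)) = -(deriv (A (-y)) (vr (-y)))
      rw [deriv.fun_neg]
    rw [intervalIntegral.integral_congr (g := fun y => -(b (-y)))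
      (fun y _ => hconv y)] at hres
    rw [intervalIntegral.integral_neg] at hres
    have h1 : (∫ y in (0:ℝ)..1, b (-y)) = ∫ y in (-1:ℝ)..0, b y := by
      have := intervalIntegral.integral_comp_neg (a := (0:ℝ)) (b := 1) (f := b)
      simpa using this
    have h2 : (∫ y in (-1:ℝ)..0, b y) = ∫ y in (0:ℝ)..1, b y := by
      have h := hbp.intervalIntegral_add_eq (-1 : ℝ) 0
      norm_num at h
      exact h
    rw [h1, h2] at hres
    linarith
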